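/- Let G be a finite connected simple graph on vertex set {1,…,n} with n ≥ 5 vertices and distinct edges e_1,…,e_m, and let W ∈ {0,1}^{m×n} be its incidence matrix. If W' ∈ {0,1}^{m×n} is any matrix each of whose rows has exactly two entries equal to 1 and which satisfies W'(W')ᵀ = WWᵀ, then there exists a permutation π of {1,…,n} such that W'_{i,j} = W_{i,π(j)} for all i ∈ {1,…,m} and j ∈ {1,…,n}. -/
import Mathlib
open Matrix Finset

section aux
variable {α : Type*} [DecidableEq α]

lemma eq_pair_of_card_two {s : Finset α} {a b : α} (hs : s.card = 2) (ha : a ∈ s)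
    (hb : b ∈ s) (hab : a ≠ b) : s = {a, b} := by
  refine (Finset.eq_of_subset_of_card_le ?_ ?_).symm
  · intro x hx; rcases Finset.mem_insert.mp hx with h | h
    · exact h ▸ ha
    · exact (Finset.mem_singleton.mp h) ▸ hb
  · rw [Finset.card_pair hab, hs]

lemma two_le_card_inter {s t : Finset α} {a b : α} (ha : a ∈ s) (ha' : a ∈ t)
    (hb : b ∈ s) (hb' : b ∈ t) (hab : a ≠ b) : 2 ≤ (s ∩ t).card := by
  have : {a, b} ⊆ s ∩ t := by
    intro x hx; rcases Finset.mem_insert.mp hx with h | h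
    · subst h; exact Finset.mem_inter.mpr ⟨ha, ha'⟩
    · rw [Finset.mem_singleton.mp h]; exact Finset.mem_inter.mpr ⟨hb, hb'⟩
  calc 2 = ({a, b} : Finset α).card := (Finset.card_pair hab).symm
  _ ≤ _ := Finset.card_le_card this

lemma tri_lemma {s t u : Finset α} (hs : s.card = 2) (ht : t.card = 2) (hu : u.card = 2)
    (hst : (s ∩ t).card = 1) (hsu : (s ∩ u).card = 1) (htu : (t ∩ u).card = 1) :
    (∃ x, x ∈ s ∧ x ∈ t ∧ x ∈ u) ∨
      ∃ a b c, a ≠ b ∧ a ≠ c ∧ b ≠ c ∧ s = {a, b} ∧ t = {b, c} ∧ u = {a, c} := by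
  obtain ⟨b, hb⟩ := Finset.card_eq_one.mp hst
  have hbs : b ∈ s := (Finset.mem_inter.mp (hb ▸ Finset.mem_singleton_self b)).1
  have hbt : b ∈ t := (Finset.mem_inter.mp (hb ▸ Finset.mem_singleton_self b)).2
  by_cases hbu : b ∈ u
  · exact Or.inl ⟨b, hbs, hbt, hbu⟩
  obtain ⟨a, has, hab⟩ := Finset.exists_mem_ne (by omega : 1 < s.card) b
  have hs' : s = {a, b} := eq_pair_of_card_two hs has hbs hab
  -- a ∈ u
  obtain ⟨y, hy⟩ := Finset.card_eq_one.mp hsu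
  have hys : y ∈ s := (Finset.mem_inter.mp (hy ▸ Finset.mem_singleton_self y)).1
  have hyu : y ∈ u := (Finset.mem_inter.mp (hy ▸ Finset.mem_singleton_self y)).2
  have hya : y = a := by
    rw [hs'] at hys
    rcases Finset.mem_insert.mp hys with h | h
    · exact h
    · exact absurd ((Finset.mem_singleton.mp h) ▸ hyu) hbu
  subst hya
  obtain ⟨c, hcu, hca⟩ := Finset.exists_mem_ne (by omega : 1 < u.card) y
  have hu' : u = {y, c} := eq_pair_of_card_two hu hyu hcu hca.symm
  -- c ∈ t
  obtain ⟨z, hz⟩ := Finset.card_eq_one.mp htu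
  have hzt : z ∈ t := (Finset.mem_inter.mp (hz ▸ Finset.mem_singleton_self z)).1
  have hzu : z ∈ u := (Finset.mem_inter.mp (hz ▸ Finset.mem_singleton_self z)).2
  have hzc : z = c := by
    rw [hu'] at hzu
    rcases Finset.mem_insert.mp hzu with h | h
    · -- z = y = a, then a ∈ s ∩ t = {b}, so a = b, contra
      exfalso
      have : z ∈ s ∩ t := Finset.mem_inter.mpr ⟨h ▸ hys, hzt⟩
      rw [hb, Finset.mem_singleton] at this
      exact hab (h ▸ this)
    · exact Finset.mem_singleton.mp h
  subst hzc
  have hcb : z ≠ b := fun h => hbu (h ▸ hzu)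
  have ht' : t = {b, z} := eq_pair_of_card_two ht hbt hzt hcb.symm
  exact Or.inr ⟨y, b, z, hab, hca.symm, hcb.symm, hs', ht', hu'⟩

lemma no_transversal {a b c : α} {d : Finset α} (hab : a ≠ b) (hac : a ≠ c) (hbc : b ≠ c)
    (h1 : (d ∩ {a, b}).card = 1) (h2 : (d ∩ {b, c}).card = 1)
    (h3 : (d ∩ {a, c}).card = 1) : False := by
  by_cases ha : a ∈ d
  · have hc : c ∉ d := by
      intro hc
      have := two_le_card_inter ha (Finset.mem_insert_self a {c}) hc
        (Finset.mem_insert_of_mem (Finset.mem_singleton_self c)) hac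
      omega
    have hbd : b ∈ d := by
      obtain ⟨x, hx⟩ := Finset.card_eq_one.mp h2
      have hxd : x ∈ d := (Finset.mem_inter.mp (hx ▸ Finset.mem_singleton_self x)).1
      have hxm : x ∈ ({b, c} : Finset α) := (Finset.mem_inter.mp (hx ▸ Finset.mem_singleton_self x)).2
      rcases Finset.mem_insert.mp hxm with h | h
      · exact h ▸ hxd
      · exact absurd ((Finset.mem_singleton.mp h) ▸ hxd) hc
    have := two_le_card_inter ha (Finset.mem_insert_self a {b}) hbd
      (Finset.mem_insert_of_mem (Finset.mem_singleton_self b)) hab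
    omega
  · have hbd : b ∈ d := by
      obtain ⟨x, hx⟩ := Finset.card_eq_one.mp h1
      have hxd : x ∈ d := (Finset.mem_inter.mp (hx ▸ Finset.mem_singleton_self x)).1
      have hxm : x ∈ ({a, b} : Finset α) := (Finset.mem_inter.mp (hx ▸ Finset.mem_singleton_self x)).2
      rcases Finset.mem_insert.mp hxm with h | h
      · exact absurd (h ▸ hxd) ha
      · exact (Finset.mem_singleton.mp h) ▸ hxd
    have hcd : c ∈ d := by
      obtain ⟨x, hx⟩ := Finset.card_eq_one.mp h3
      have hxd : x ∈ d := (Finset.mem_inter.mp (hx ▸ Finset.mem_singleton_self x)).1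
      have hxm : x ∈ ({a, c} : Finset α) := (Finset.mem_inter.mp (hx ▸ Finset.mem_singleton_self x)).2
      rcases Finset.mem_insert.mp hxm with h | h
      · exact absurd (h ▸ hxd) ha
      · exact (Finset.mem_singleton.mp h) ▸ hxd
    have := two_le_card_inter hbd (Finset.mem_insert_self b {c}) hcd
      (Finset.mem_insert_of_mem (Finset.mem_singleton_self c)) hbc
    omega

lemma no_single_hit {a b c : α} {d : Finset α} (h1 : (d ∩ {a, b}).card = 1)
    (h2 : (d ∩ {b, c}).card = 0) (h3 : (d ∩ {a, c}).card = 0) : False := by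
  obtain ⟨x, hx⟩ := Finset.card_eq_one.mp h1
  have hxd : x ∈ d := (Finset.mem_inter.mp (hx ▸ Finset.mem_singleton_self x)).1
  have hxm : x ∈ ({a, b} : Finset α) := (Finset.mem_inter.mp (hx ▸ Finset.mem_singleton_self x)).2
  rcases Finset.mem_insert.mp hxm with h | h
  · have : x ∈ d ∩ {a, c} := Finset.mem_inter.mpr ⟨hxd, by simp [h]⟩
    rw [Finset.card_eq_zero] at h3; simp [h3] at this
  · have : x ∈ d ∩ {b, c} := Finset.mem_inter.mpr ⟨hxd, by simp [Finset.mem_singleton.mp h]⟩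
    rw [Finset.card_eq_zero] at h2; simp [h2] at this

end aux

theorem gram_determines_incidence_of_connected {n m : ℕ} (hn : 5 ≤ n)
    (G : SimpleGraph (Fin n)) (hG : G.Connected)
    (e : Fin m → Sym2 (Fin n)) (he : Function.Injective e)
    (heE : ∀ i, e i ∈ G.edgeSet) (hsurj : ∀ f ∈ G.edgeSet, ∃ i, e i = f)
    (W W' : Matrix (Fin m) (Fin n) ℤ)
    (hW : ∀ i v, W i v = if v ∈ e i then 1 else 0)
    (hW'01 : ∀ i v, W' i v = 0 ∨ W' i v = 1)
    (hW'row : ∀ i, (Finset.univ.filter (fun v => W' i v = 1)).card = 2)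
    (hGram : W' * W'ᵀ = W * Wᵀ) :
    ∃ π : Equiv.Perm (Fin n), ∀ i v, W' i v = W i (π v) := by
  classical
  set A : Fin m → Finset (Fin n) := fun i => Finset.univ.filter (fun v => v ∈ e i) with hAdef
  set B : Fin m → Finset (Fin n) := fun i => Finset.univ.filter (fun v => W' i v = 1) with hBdef
  have hmemA : ∀ i v, v ∈ A i ↔ v ∈ e i := fun i v => by simp [hAdef]
  have hmemB : ∀ i v, v ∈ B i ↔ W' i v = 1 := fun i v => by simp [hBdef]
  have hBcard : ∀ i, (B i).card = 2 := fun i => hW'row i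
  have hApair : ∀ i p q, e i = s(p, q) → A i = {p, q} := by
    intro i p q hei
    ext x
    simp [hmemA, hei, Sym2.mem_iff]
  have hA2 : ∀ i : Fin m, ∃ p q, p ≠ q ∧ e i = s(p, q) ∧ A i = {p, q} := by
    intro i
    obtain ⟨p, q, hei⟩ : ∃ p q, e i = s(p, q) := by
      induction e i using Sym2.ind with
      | _ p q => exact ⟨p, q, rfl⟩
    have hadj : G.Adj p q := by rw [← SimpleGraph.mem_edgeSet, ← hei]; exact heE i
    exact ⟨p, q, hadj.ne, hei, hApair i p q hei⟩
  have hAcard : ∀ i, (A i).card = 2 := by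
    intro i
    obtain ⟨p, q, hpq, _, hi⟩ := hA2 i
    rw [hi, Finset.card_pair hpq]
  have hcard : ∀ i j, (B i ∩ B j).card = (A i ∩ A j).card := by
    intro i j
    have h1 : (W' * W'ᵀ) i j = ((B i ∩ B j).card : ℤ) := by
      rw [Matrix.mul_apply]
      have hv : ∀ v, W' i v * W'ᵀ v j = if v ∈ B i ∩ B j then (1 : ℤ) else 0 := by
        intro v
        rw [Matrix.transpose_apply]
        by_cases hm : v ∈ B i ∩ B j
        · obtain ⟨h1, h2⟩ := Finset.mem_inter.mp hm
          rw [hmemB] at h1 h2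
          rw [h1, h2, if_pos hm]; ring
        · rw [if_neg hm]
          rw [Finset.mem_inter] at hm
          push_neg at hm
          rcases hW'01 i v with h | h
          · rw [h]; ring
          · rcases hW'01 j v with h2 | h2
            · rw [h2]; ring
            · exact absurd ((hmemB j v).mpr h2) (hm ((hmemB i v).mpr h))
      rw [Finset.sum_congr rfl (fun v _ => hv v), Finset.sum_boole,
        Finset.filter_mem_eq_inter, Finset.univ_inter]
    have h2 : (W * Wᵀ) i j = ((A i ∩ A j).card : ℤ) := by
      rw [Matrix.mul_apply]
      have hv : ∀ v, W i v * Wᵀ v j = if v ∈ A i ∩ A j then (1 : ℤ) else 0 := by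
        intro v
        rw [Matrix.transpose_apply, hW, hW]
        by_cases h1 : v ∈ e i <;> by_cases h2 : v ∈ e j <;>
          simp [h1, h2, Finset.mem_inter, hmemA]
      rw [Finset.sum_congr rfl (fun v _ => hv v), Finset.sum_boole,
        Finset.filter_mem_eq_inter, Finset.univ_inter]
    rw [hGram, h2] at h1
    exact_mod_cast h1.symm
  have hAne : ∀ i j, i ≠ j → A i ≠ A j := by
    intro i j hij heq
    apply hij
    apply he
    obtain ⟨p, q, hpq, hei, hAi⟩ := hA2 i
    obtain ⟨p2, q2, hpq2, hej, hAj⟩ := hA2 j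
    rw [hAi, hAj] at heq
    have hp2 : p2 ∈ ({p, q} : Finset (Fin n)) := heq ▸ Finset.mem_insert_self p2 {q2}
    have hq2 : q2 ∈ ({p, q} : Finset (Fin n)) :=
      heq ▸ Finset.mem_insert_of_mem (Finset.mem_singleton_self q2)
    rw [hei, hej]
    rcases Finset.mem_insert.mp hp2 with h | h
    · subst h
      rcases Finset.mem_insert.mp hq2 with h2 | h2
      · exact absurd h2.symm hpq2
      · rw [Finset.mem_singleton.mp h2]
    · rw [Finset.mem_singleton.mp h]
      rcases Finset.mem_insert.mp hq2 with h2 | h2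
      · rw [h2, Sym2.eq_swap]
      · exact absurd (((Finset.mem_singleton.mp h2).trans (Finset.mem_singleton.mp h).symm).symm)
          hpq2
  have hAinterle : ∀ i j, i ≠ j → (A i ∩ A j).card ≤ 1 := by
    intro i j hij
    by_contra h
    push_neg at h
    have h1 : A i ∩ A j = A i := Finset.eq_of_subset_of_card_le Finset.inter_subset_left
      (by rw [hAcard]; omega)
    have h2 : A i ∩ A j = A j := Finset.eq_of_subset_of_card_le Finset.inter_subset_right
      (by rw [hAcard]; omega)
    exact hAne i j hij (h1.symm.trans h2)
  have hvsingle : ∀ v (i j : Fin m), i ≠ j → v ∈ A i → v ∈ A j → A i ∩ A j = {v} := by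
    intro v i j hij hvi hvj
    rw [Finset.eq_singleton_iff_unique_mem]
    refine ⟨Finset.mem_inter.mpr ⟨hvi, hvj⟩, fun x hx => ?_⟩
    exact Finset.card_le_one.mp (hAinterle i j hij) x hx v (Finset.mem_inter.mpr ⟨hvi, hvj⟩)
  have hedge : ∀ p q, G.Adj p q → ∃ i, A i = {p, q} := by
    intro p q hadj
    obtain ⟨i, hi⟩ := hsurj s(p, q) ((SimpleGraph.mem_edgeSet G).mpr hadj)
    exact ⟨i, hApair i p q hi⟩
  have hcut : ∀ T : Finset (Fin n), T.Nonempty → T ≠ Finset.univ →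
      ∃ (j : Fin m) (x y : Fin n), A j = {x, y} ∧ x ∈ T ∧ y ∉ T := by
    rintro T ⟨v, hv⟩ hTne
    obtain ⟨w, hw⟩ : ∃ w, w ∉ T := by
      by_contra h; push_neg at h; exact hTne (Finset.eq_univ_iff_forall.mpr h)
    obtain ⟨p⟩ := hG.preconnected v w
    obtain ⟨d, _, hd1, hd2⟩ := p.exists_boundary_dart (↑T : Set (Fin n)) hv hw
    obtain ⟨j, hj⟩ := hedge d.fst d.snd d.adj
    exact ⟨j, d.fst, d.snd, hj, hd1, hd2⟩
  have hdegpos : ∀ v, ∃ i, v ∈ A i := by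
    intro v
    have hne : ({v} : Finset (Fin n)) ≠ Finset.univ := by
      intro h
      have hc := Finset.card_univ (α := Fin n)
      rw [← h, Finset.card_singleton, Fintype.card_fin] at hc
      omega
    obtain ⟨j, x, y, hj, hx, hy⟩ := hcut {v} ⟨v, Finset.mem_singleton_self v⟩ hne
    rw [Finset.mem_singleton] at hx
    exact ⟨j, by rw [hj, ← hx]; exact Finset.mem_insert_self x {y}⟩
  have hother : ∀ (i : Fin m) v, v ∈ A i → ∃ u, u ≠ v ∧ A i = {v, u} := by
    intro i v hv
    obtain ⟨p, q, hpq, _, hi⟩ := hA2 i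
    rw [hi] at hv ⊢
    rcases Finset.mem_insert.mp hv with h | h
    · exact ⟨q, by rw [h]; exact hpq.symm, by rw [h]⟩
    · rw [Finset.mem_singleton.mp h]
      exact ⟨p, fun hc => hpq (hc ▸ rfl), Finset.pair_comm p q⟩
  have hBint : ∀ v (i j : Fin m), i ≠ j → v ∈ A i → v ∈ A j → (B i ∩ B j).card = 1 := by
    intro v i j hij hi hj
    rw [hcard, hvsingle v i j hij hi hj, Finset.card_singleton]
  have hcommon : ∀ v (i1 i2 : Fin m), i1 ≠ i2 → v ∈ A i1 → v ∈ A i2 →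
      ∃ x, ∀ j, v ∈ A j → x ∈ B j := by
    intro v i1 i2 h12 hv1 hv2
    obtain ⟨x, hx⟩ := Finset.card_eq_one.mp (hBint v i1 i2 h12 hv1 hv2)
    refine ⟨x, fun j hvj => ?_⟩
    by_cases hj1 : j = i1
    · subst hj1; exact (Finset.mem_inter.mp (hx ▸ Finset.mem_singleton_self x)).1
    by_cases hj2 : j = i2
    · subst hj2; exact (Finset.mem_inter.mp (hx ▸ Finset.mem_singleton_self x)).2
    rcases tri_lemma (hBcard i1) (hBcard i2) (hBcard j) (hBint v i1 i2 h12 hv1 hv2)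
      (hBint v i1 j (fun h => hj1 h.symm) hv1 hvj)
      (hBint v i2 j (fun h => hj2 h.symm) hv2 hvj) with
      ⟨y, hy1, hy2, hyj⟩ | ⟨a, b, c, hab, hac, hbc, hB1, hB2, hBj⟩
    · have hm : y ∈ B i1 ∩ B i2 := Finset.mem_inter.mpr ⟨hy1, hy2⟩
      rw [hx, Finset.mem_singleton] at hm
      exact hm ▸ hyj
    · exfalso
      by_cases h4 : ∀ k, v ∈ A k → k = i1 ∨ k = i2 ∨ k = j
      · obtain ⟨u1, hu1, hA1⟩ := hother i1 v hv1
        obtain ⟨u2, hu2, hA2x⟩ := hother i2 v hv2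
        obtain ⟨u3, hu3, hAjx⟩ := hother j v hvj
        have hu12 : u1 ≠ u2 := fun h => hAne i1 i2 h12 (by rw [hA1, hA2x, h])
        have hu13 : u1 ≠ u3 := fun h => hAne i1 j (fun hh => hj1 hh.symm) (by rw [hA1, hAjx, h])
        have hu23 : u2 ≠ u3 := fun h => hAne i2 j (fun hh => hj2 hh.symm) (by rw [hA2x, hAjx, h])
        set T : Finset (Fin n) := {v, u1, u2, u3} with hT
        have hvT : v ∈ T := by rw [hT]; exact Finset.mem_insert_self v _
        have hu1T : u1 ∈ T := by simp [hT]
        have hu2T : u2 ∈ T := by simp [hT]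
        have hu3T : u3 ∈ T := by simp [hT]
        have hTne : T ≠ Finset.univ := by
          intro h
          have c1 := Finset.card_insert_le v ({u1, u2, u3} : Finset (Fin n))
          have c2 := Finset.card_insert_le u1 ({u2, u3} : Finset (Fin n))
          have c3 := Finset.card_insert_le u2 ({u3} : Finset (Fin n))
          have c4 : ({u3} : Finset (Fin n)).card = 1 := Finset.card_singleton u3
          have c5 : T.card = n := by rw [h, Finset.card_univ, Fintype.card_fin]
          rw [hT] at c5
          omega
        obtain ⟨j2, x2, y2, hAj2, hx2, hy2⟩ := hcut T ⟨v, hvT⟩ hTne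
        have hy2m : y2 ∈ A j2 := by
          rw [hAj2]; exact Finset.mem_insert_of_mem (Finset.mem_singleton_self y2)
        have hx2m : x2 ∈ A j2 := by rw [hAj2]; exact Finset.mem_insert_self x2 {y2}
        have hvnotj2 : v ∉ A j2 := by
          intro hvj2
          apply hy2
          rcases h4 j2 hvj2 with h | h | h <;> subst h
          · rw [hA1] at hy2m
            rcases Finset.mem_insert.mp hy2m with h | h
            · exact h ▸ hvT
            · exact (Finset.mem_singleton.mp h) ▸ hu1T
          · rw [hA2x] at hy2m
            rcases Finset.mem_insert.mp hy2m with h | h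
            · exact h ▸ hvT
            · exact (Finset.mem_singleton.mp h) ▸ hu2T
          · rw [hAjx] at hy2m
            rcases Finset.mem_insert.mp hy2m with h | h
            · exact h ▸ hvT
            · exact (Finset.mem_singleton.mp h) ▸ hu3T
        have hx2v : x2 ≠ v := fun h => hvnotj2 (h ▸ hx2m)
        have hx2cases : x2 = u1 ∨ x2 = u2 ∨ x2 = u3 := by
          rw [hT] at hx2
          simp only [Finset.mem_insert, Finset.mem_singleton] at hx2
          tauto
        have hkey : ∀ (k : Fin m) (u : Fin n), u ≠ v → A k = {v, u} → u ∈ T →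
            (B j2 ∩ B k).card = if x2 = u then 1 else 0 := by
          intro k u huv hAk huT
          have hvk : v ∈ A k := by rw [hAk]; exact Finset.mem_insert_self v {u}
          rw [hcard]
          have hint : A j2 ∩ A k = if x2 = u then {x2} else ∅ := by
            split_ifs with hxu
            · rw [Finset.eq_singleton_iff_unique_mem]
              constructor
              · refine Finset.mem_inter.mpr ⟨hx2m, ?_⟩
                rw [hAk, hxu]
                exact Finset.mem_insert_of_mem (Finset.mem_singleton_self u)
              · intro z hz
                obtain ⟨hz1, hz2⟩ := Finset.mem_inter.mp hz
                rw [hAj2] at hz1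
                rcases Finset.mem_insert.mp hz1 with h | h
                · exact h
                · exfalso
                  apply hy2
                  rw [Finset.mem_singleton.mp h] at hz2
                  rw [hAk] at hz2
                  rcases Finset.mem_insert.mp hz2 with h2 | h2
                  · exact h2 ▸ hvT
                  · exact (Finset.mem_singleton.mp h2) ▸ huT
            · rw [Finset.eq_empty_iff_forall_notMem]
              intro z hz
              obtain ⟨hz1, hz2⟩ := Finset.mem_inter.mp hz
              rw [hAj2] at hz1
              rw [hAk] at hz2
              rcases Finset.mem_insert.mp hz1 with h | h
              · subst h
                rcases Finset.mem_insert.mp hz2 with h2 | h2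
                · exact hx2v h2
                · exact hxu (Finset.mem_singleton.mp h2)
              · rw [Finset.mem_singleton.mp h] at hz2
                apply hy2
                rcases Finset.mem_insert.mp hz2 with h2 | h2
                · exact h2 ▸ hvT
                · exact (Finset.mem_singleton.mp h2) ▸ huT
          rw [hint]
          split_ifs <;> simp
        have k1 := hkey i1 u1 hu1 hA1 hu1T
        have k2 := hkey i2 u2 hu2 hA2x hu2T
        have k3 := hkey j u3 hu3 hAjx hu3T
        rw [hB1] at k1
        rw [hB2] at k2
        rw [hBj] at k3
        rcases hx2cases with h | h | h
        · rw [if_pos h] at k1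
          rw [if_neg (fun hh => hu12 (h ▸ hh))] at k2
          rw [if_neg (fun hh => hu13 (h ▸ hh))] at k3
          exact no_single_hit k1 k2 k3
        · rw [if_neg (fun (hh : x2 = u1) => hu12 (hh ▸ h))] at k1
          rw [if_pos h] at k2
          rw [if_neg (fun hh => hu23 (h ▸ hh))] at k3
          rw [Finset.pair_comm a c] at k3
          rw [Finset.pair_comm a b] at k1
          exact no_single_hit k2 k3 k1
        · rw [if_neg (fun (hh : x2 = u1) => hu13 (hh ▸ h))] at k1
          rw [if_neg (fun (hh : x2 = u2) => hu23 (hh ▸ h))] at k2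
          rw [if_pos h] at k3
          rw [Finset.pair_comm a c] at k3
          rw [Finset.pair_comm b c] at k2
          exact no_single_hit k3 k1 k2
      · push_neg at h4
        obtain ⟨i4, hv4, h41, h42, h4j⟩ := h4
        have k1 := hBint v i4 i1 h41 hv4 hv1
        have k2 := hBint v i4 i2 h42 hv4 hv2
        have k3 := hBint v i4 j h4j hv4 hvj
        rw [hB1] at k1
        rw [hB2] at k2
        rw [hBj] at k3
        exact no_transversal hab hac hbc k1 k2 k3
  have hAinj : ∀ j k : Fin m, A j = A k → j = k := by
    intro j k h; by_contra hne; exact hAne j k hne h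
  have hψex : ∀ v, ∃ x, ∀ (i1 i2 j : Fin m), i1 ≠ i2 → v ∈ A i1 → v ∈ A i2 → v ∈ A j →
      x ∈ B j := by
    intro v
    by_cases h : ∃ i1 i2, i1 ≠ i2 ∧ v ∈ A i1 ∧ v ∈ A i2
    · obtain ⟨i1, i2, h12, h1, h2⟩ := h
      obtain ⟨x, hx⟩ := hcommon v i1 i2 h12 h1 h2
      exact ⟨x, fun _ _ j _ _ _ hj => hx j hj⟩
    · exact ⟨v, fun i1 i2 j h12 h1 h2 _ => absurd ⟨i1, i2, h12, h1, h2⟩ h⟩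
  choose ψ hψ using hψex
  have hstep2 : ∀ (i : Fin m) (p q : Fin n), p ≠ q → A i = {p, q} →
      (∃ j k, j ≠ k ∧ p ∈ A j ∧ p ∈ A k) → (∃ j k, j ≠ k ∧ q ∈ A j ∧ q ∈ A k) →
      ψ p ≠ ψ q := by
    intro i p q hpq hAi hDp hDq hx
    obtain ⟨jp, kp, hjkp, hpjp, hpkp⟩ := hDp
    obtain ⟨jq, kq, hjkq, hqjq, hqkq⟩ := hDq
    have hpB : ∀ j, p ∈ A j → ψ p ∈ B j := fun j hj => hψ p jp kp j hjkp hpjp hpkp hj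
    have hqB : ∀ j, q ∈ A j → ψ p ∈ B j := fun j hj => by
      rw [hx]; exact hψ q jq kq j hjkq hqjq hqkq hj
    have hpA : p ∈ A i := by rw [hAi]; exact Finset.mem_insert_self p {q}
    have hqA : q ∈ A i := by rw [hAi]; exact Finset.mem_insert_of_mem (Finset.mem_singleton_self q)
    have hint : ∀ j k, p ∈ A j → q ∈ A k → (A j ∩ A k).Nonempty := by
      intro j k hj hk
      have h1 : ψ p ∈ B j ∩ B k := Finset.mem_inter.mpr ⟨hpB j hj, hqB k hk⟩
      have h2 : 0 < (B j ∩ B k).card := Finset.card_pos.mpr ⟨ψ p, h1⟩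
      rw [hcard] at h2
      exact Finset.card_pos.mp h2
    -- a q-edge distinct from i
    obtain ⟨k0, hk0i, hqk0⟩ : ∃ k0, k0 ≠ i ∧ q ∈ A k0 := by
      by_cases h : jq = i
      · exact ⟨kq, fun hh => hjkq (h.trans hh.symm), hqkq⟩
      · exact ⟨jq, h, hqjq⟩
    obtain ⟨b, hbq, hAk0⟩ := hother k0 q hqk0
    have hbp : b ≠ p := by
      intro h
      apply hk0i
      apply hAinj
      rw [hAk0, hAi, h, Finset.pair_comm]
    -- all p-edges other than i are {p, b}
    have hpa : ∀ j, p ∈ A j → j ≠ i → A j = {p, b} := by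
      intro j hpj hji
      obtain ⟨a, hap, hAj⟩ := hother j p hpj
      have haq : a ≠ q := by
        intro h
        exact hji (hAinj j i (by rw [hAj, hAi, h]))
      obtain ⟨z, hz⟩ := hint j k0 hpj hqk0
      obtain ⟨hz1, hz2⟩ := Finset.mem_inter.mp hz
      rw [hAj] at hz1
      rw [hAk0] at hz2
      have hza : z = a := by
        rcases Finset.mem_insert.mp hz1 with h | h
        · exfalso
          rw [h] at hz2
          rcases Finset.mem_insert.mp hz2 with h2 | h2
          · exact hpq h2
          · exact hbp (Finset.mem_singleton.mp h2).symm
        · exact Finset.mem_singleton.mp h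
      rw [hza] at hz2
      rcases Finset.mem_insert.mp hz2 with h2 | h2
      · exact absurd h2 haq
      · rw [hAj, Finset.mem_singleton.mp h2]
    obtain ⟨j0, hj0i, hpj0⟩ : ∃ j0, j0 ≠ i ∧ p ∈ A j0 := by
      by_cases h : jp = i
      · exact ⟨kp, fun hh => hjkp (h.trans hh.symm), hpkp⟩
      · exact ⟨jp, h, hpjp⟩
    have hAj0 : A j0 = {p, b} := hpa j0 hpj0 hj0i
    -- all q-edges other than i are {q, b}
    have hqa : ∀ k, q ∈ A k → k ≠ i → A k = {q, b} := by
      intro k hqk hki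
      obtain ⟨c, hcq, hAk⟩ := hother k q hqk
      have hcp : c ≠ p := by
        intro h
        exact hki (hAinj k i (by rw [hAk, hAi, h, Finset.pair_comm]))
      obtain ⟨z, hz⟩ := hint j0 k hpj0 hqk
      obtain ⟨hz1, hz2⟩ := Finset.mem_inter.mp hz
      rw [hAj0] at hz1
      rw [hAk] at hz2
      have hzb : z = b := by
        rcases Finset.mem_insert.mp hz1 with h | h
        · exfalso
          rw [h] at hz2
          rcases Finset.mem_insert.mp hz2 with h2 | h2
          · exact hpq h2
          · exact hcp (Finset.mem_singleton.mp h2).symm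
        · exact Finset.mem_singleton.mp h
      rw [hzb] at hz2
      rcases Finset.mem_insert.mp hz2 with h2 | h2
      · exact absurd h2 hbq
      · rw [hAk, ← Finset.mem_singleton.mp h2]
    -- the common neighbour b
    have hwj0 : b ∈ A j0 := by
      rw [hAj0]; exact Finset.mem_insert_of_mem (Finset.mem_singleton_self b)
    have hwk0 : b ∈ A k0 := by
      rw [hAk0]; exact Finset.mem_insert_of_mem (Finset.mem_singleton_self b)
    have hj0k0 : j0 ≠ k0 := by
      intro h
      rw [← h, hAj0] at hqk0
      rcases Finset.mem_insert.mp hqk0 with h2 | h2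
      · exact hpq h2.symm
      · exact hbq (Finset.mem_singleton.mp h2).symm
    have hψwB : ∀ l, b ∈ A l → ψ b ∈ B l := fun l hl => hψ b j0 k0 l hj0k0 hwj0 hwk0 hl
    have hψwx : ψ b = ψ p := by
      obtain ⟨z, hz⟩ := Finset.card_eq_one.mp (hBint b j0 k0 hj0k0 hwj0 hwk0)
      have h1 : ψ b ∈ B j0 ∩ B k0 := Finset.mem_inter.mpr ⟨hψwB j0 hwj0, hψwB k0 hwk0⟩
      have h2 : ψ p ∈ B j0 ∩ B k0 := Finset.mem_inter.mpr ⟨hpB j0 hpj0, hqB k0 hqk0⟩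
      rw [hz, Finset.mem_singleton] at h1 h2
      rw [h1, h2]
    have hbp2 : p ≠ b := fun h => hbp h.symm
    have hbq2 : q ≠ b := fun h => hbq h.symm
    by_cases hl : ∃ l, b ∈ A l ∧ l ≠ j0 ∧ l ≠ k0
    · obtain ⟨l, hbl, hlj0, hlk0⟩ := hl
      have hxl : ψ p ∈ B l := hψwx ▸ hψwB l hbl
      have hxi : ψ p ∈ B i := hpB i hpA
      have hmm : ψ p ∈ B i ∩ B l := Finset.mem_inter.mpr ⟨hxi, hxl⟩
      have h2 : 0 < (A i ∩ A l).card := by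
        rw [← hcard]; exact Finset.card_pos.mpr ⟨ψ p, hmm⟩
      obtain ⟨z, hz⟩ := Finset.card_pos.mp h2
      obtain ⟨hz1, hz2⟩ := Finset.mem_inter.mp hz
      rw [hAi] at hz1
      have hli : l ≠ i := by
        intro h
        rw [h, hAi] at hbl
        rcases Finset.mem_insert.mp hbl with h2 | h2
        · exact hbp h2
        · exact hbq (Finset.mem_singleton.mp h2)
      rcases Finset.mem_insert.mp hz1 with h2 | h2
      · rw [h2] at hz2
        exact hlj0 (hAinj l j0 ((hpa l hz2 hli).trans hAj0.symm))
      · rw [Finset.mem_singleton.mp h2] at hz2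
        exact hlk0 (hAinj l k0 ((hqa l hz2 hli).trans hAk0.symm))
    · push_neg at hl
      set T : Finset (Fin n) := {p, q, b} with hT
      have hpT : p ∈ T := by simp [hT]
      have hqT : q ∈ T := by simp [hT]
      have hbT : b ∈ T := by simp [hT]
      have hTne : T ≠ Finset.univ := by
        intro h
        have c1 := Finset.card_insert_le p ({q, b} : Finset (Fin n))
        have c2 := Finset.card_insert_le q ({b} : Finset (Fin n))
        have c3 : ({b} : Finset (Fin n)).card = 1 := Finset.card_singleton b
        have c5 : T.card = n := by rw [h, Finset.card_univ, Fintype.card_fin]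
        rw [hT] at c5
        omega
      obtain ⟨j2, x2, y2, hAj2, hx2, hy2⟩ := hcut T ⟨p, hpT⟩ hTne
      have hx2m : x2 ∈ A j2 := by rw [hAj2]; exact Finset.mem_insert_self x2 {y2}
      have hy2m : y2 ∈ A j2 := by
        rw [hAj2]; exact Finset.mem_insert_of_mem (Finset.mem_singleton_self y2)
      apply hy2
      have hsubT : ∀ j2, (j2 = i ∨ j2 = j0 ∨ j2 = k0) → y2 ∈ A j2 → y2 ∈ T := by
        intro j3 hj3 hy3
        rcases hj3 with h | h | h <;> subst h
        · rw [hAi] at hy3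
          rcases Finset.mem_insert.mp hy3 with h2 | h2
          · exact h2 ▸ hpT
          · exact (Finset.mem_singleton.mp h2) ▸ hqT
        · rw [hAj0] at hy3
          rcases Finset.mem_insert.mp hy3 with h2 | h2
          · exact h2 ▸ hpT
          · exact (Finset.mem_singleton.mp h2) ▸ hbT
        · rw [hAk0] at hy3
          rcases Finset.mem_insert.mp hy3 with h2 | h2
          · exact h2 ▸ hqT
          · exact (Finset.mem_singleton.mp h2) ▸ hbT
      rw [hT] at hx2
      rcases Finset.mem_insert.mp hx2 with h | h
      · -- x2 = p
        rw [h] at hx2m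
        by_cases hji : j2 = i
        · exact hsubT j2 (Or.inl hji) hy2m
        · exact hsubT j2 (Or.inr (Or.inl (hAinj j2 j0 ((hpa j2 hx2m hji).trans hAj0.symm))))
            hy2m
      rcases Finset.mem_insert.mp h with h | h
      · -- x2 = q
        rw [h] at hx2m
        by_cases hji : j2 = i
        · exact hsubT j2 (Or.inl hji) hy2m
        · exact hsubT j2 (Or.inr (Or.inr (hAinj j2 k0 ((hqa j2 hx2m hji).trans hAk0.symm))))
            hy2m
      · -- x2 = b
        rw [Finset.mem_singleton.mp h] at hx2m
        by_cases hjj0 : j2 = j0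
        · exact hsubT j2 (Or.inr (Or.inl hjj0)) hy2m
        · exact hsubT j2 (Or.inr (Or.inr (hl j2 hx2m hjj0))) hy2m
  have hdeg1excl : ∀ (i : Fin m) (p q : Fin n), p ≠ q → A i = {p, q} →
      (∀ j, p ∈ A j → j = i) → (∀ j, q ∈ A j → j = i) → False := by
    intro i p q hpq hAi hp hq
    have hTne : ({p, q} : Finset (Fin n)) ≠ Finset.univ := by
      intro h
      have c1 := Finset.card_insert_le p ({q} : Finset (Fin n))
      have c2 : ({q} : Finset (Fin n)).card = 1 := Finset.card_singleton q
      have c5 : ({p, q} : Finset (Fin n)).card = n := by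
        rw [h, Finset.card_univ, Fintype.card_fin]
      omega
    obtain ⟨j2, x2, y2, hAj2, hx2, hy2⟩ := hcut {p, q} ⟨p, Finset.mem_insert_self p {q}⟩ hTne
    have hx2m : x2 ∈ A j2 := by rw [hAj2]; exact Finset.mem_insert_self x2 {y2}
    have hy2m : y2 ∈ A j2 := by
      rw [hAj2]; exact Finset.mem_insert_of_mem (Finset.mem_singleton_self y2)
    apply hy2
    have hji : j2 = i := by
      rcases Finset.mem_insert.mp hx2 with h | h
      · exact hp j2 (h ▸ hx2m)
      · exact hq j2 ((Finset.mem_singleton.mp h) ▸ hx2m)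
    rw [hji, hAi] at hy2m
    exact hy2m
  have hφex : ∀ v, ∃ y, ∀ (i : Fin m) (u : Fin n), v ∈ A i → u ≠ v → A i = {v, u} →
      y ∈ B i ∧ ((∃ j k, j ≠ k ∧ v ∈ A j ∧ v ∈ A k) → y = ψ v) ∧
      (¬(∃ j k, j ≠ k ∧ v ∈ A j ∧ v ∈ A k) →
        ((∃ j k, j ≠ k ∧ u ∈ A j ∧ u ∈ A k) ∧ y ≠ ψ u)) := by
    intro v
    by_cases hD : ∃ j k, j ≠ k ∧ v ∈ A j ∧ v ∈ A k
    · obtain ⟨j, k, hjk, hvj, hvk⟩ := hD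
      refine ⟨ψ v, fun i u hvi hu hAi => ?_⟩
      exact ⟨hψ v j k i hjk hvj hvk hvi, fun _ => rfl,
        fun hc => absurd ⟨j, k, hjk, hvj, hvk⟩ hc⟩
    · obtain ⟨i0, hvi0⟩ := hdegpos v
      obtain ⟨u0, hu0v, hAi0⟩ := hother i0 v hvi0
      have huniq : ∀ j, v ∈ A j → j = i0 := by
        intro j hvj
        by_contra hne
        exact hD ⟨j, i0, hne, hvj, hvi0⟩
      have hu0A : u0 ∈ A i0 := by
        rw [hAi0]; exact Finset.mem_insert_of_mem (Finset.mem_singleton_self u0)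
      have hDu : ∃ j k, j ≠ k ∧ u0 ∈ A j ∧ u0 ∈ A k := by
        by_contra hDu
        have huuniq : ∀ j, u0 ∈ A j → j = i0 := by
          intro j hj
          by_contra hne
          exact hDu ⟨j, i0, hne, hj, hu0A⟩
        exact hdeg1excl i0 v u0 (fun h => hu0v h.symm) hAi0 huniq huuniq
      obtain ⟨j, k, hjk, hu0j, hu0k⟩ := hDu
      have hψu0B : ψ u0 ∈ B i0 := hψ u0 j k i0 hjk hu0j hu0k hu0A
      obtain ⟨y, hyB, hyne⟩ := Finset.exists_mem_ne
        (by rw [hBcard]; omega : 1 < (B i0).card) (ψ u0)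
      refine ⟨y, fun i u hvi hu hAi => ?_⟩
      have hii0 : i = i0 := huniq i hvi
      subst hii0
      have huu0 : u = u0 := by
        have : u0 ∈ ({v, u} : Finset (Fin n)) := hAi ▸ hu0A
        rcases Finset.mem_insert.mp this with h | h
        · exact absurd h hu0v
        · exact (Finset.mem_singleton.mp h).symm
      subst huu0
      exact ⟨hyB, fun hc => absurd hc hD, fun _ => ⟨⟨j, k, hjk, hu0j, hu0k⟩, hyne⟩⟩
  choose φ hφ using hφex
  have hQ : ∀ (i : Fin m) (p q : Fin n), p ≠ q → A i = {p, q} →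
      φ p ≠ φ q ∧ B i = {φ p, φ q} := by
    intro i p q hpq hAi
    have hpA : p ∈ A i := by rw [hAi]; exact Finset.mem_insert_self p {q}
    have hqA : q ∈ A i := by rw [hAi]; exact Finset.mem_insert_of_mem (Finset.mem_singleton_self q)
    have h1 := hφ p i q hpA hpq.symm hAi
    have h2 := hφ q i p hqA hpq (by rw [hAi, Finset.pair_comm])
    have hne : φ p ≠ φ q := by
      by_cases hDp : ∃ j k, j ≠ k ∧ p ∈ A j ∧ p ∈ A k
      · by_cases hDq : ∃ j k, j ≠ k ∧ q ∈ A j ∧ q ∈ A k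
        · rw [h1.2.1 hDp, h2.2.1 hDq]
          exact hstep2 i p q hpq hAi hDp hDq
        · rw [h1.2.1 hDp]
          exact fun h => (h2.2.2 hDq).2 h.symm
      · rw [h2.2.1 (h1.2.2 hDp).1]
        exact (h1.2.2 hDp).2
    exact ⟨hne, eq_pair_of_card_two (hBcard i) h1.1 h2.1 hne⟩
  have hmemφ : ∀ v (j : Fin m), v ∈ A j → φ v ∈ B j := by
    intro v j hv
    obtain ⟨u, hu, hAj⟩ := hother j v hv
    exact (hφ v j u hv hu hAj).1
  have hinj : Function.Injective φ := by
    intro v w hvw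
    by_contra hne
    by_cases hadj : ∃ i, v ∈ A i ∧ w ∈ A i
    · obtain ⟨i, hvi, hwi⟩ := hadj
      have hAi : A i = {v, w} := eq_pair_of_card_two (hAcard i) hvi hwi hne
      exact (hQ i v w hne hAi).1 hvw
    · push_neg at hadj
      have hmeet : ∀ (i j : Fin m), v ∈ A i → w ∈ A j → (A i ∩ A j).Nonempty := by
        intro i j hi hj
        have h1 : φ v ∈ B i ∩ B j :=
          Finset.mem_inter.mpr ⟨hmemφ v i hi, hvw ▸ hmemφ w j hj⟩
        have h2 : 0 < (B i ∩ B j).card := Finset.card_pos.mpr ⟨φ v, h1⟩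
        rw [hcard] at h2
        exact Finset.card_pos.mp h2
      obtain ⟨j0, hj0⟩ := hdegpos w
      obtain ⟨b, hbw, hAj0⟩ := hother j0 w hj0
      have hbv : b ≠ v := by
        intro h
        refine hadj j0 ?_ hj0
        rw [hAj0, h]
        exact Finset.mem_insert_of_mem (Finset.mem_singleton_self v)
      have hva : ∀ i, v ∈ A i → A i = {v, b} := by
        intro i hi
        obtain ⟨a, hav, hAi⟩ := hother i v hi
        have haw : a ≠ w := by
          intro h
          refine hadj i hi ?_
          rw [hAi, h]
          exact Finset.mem_insert_of_mem (Finset.mem_singleton_self w)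
        obtain ⟨z, hz⟩ := hmeet i j0 hi hj0
        obtain ⟨hz1, hz2⟩ := Finset.mem_inter.mp hz
        rw [hAi] at hz1
        rw [hAj0] at hz2
        have hza : z = a := by
          rcases Finset.mem_insert.mp hz1 with h | h
          · exfalso
            rw [h] at hz2
            rcases Finset.mem_insert.mp hz2 with h2 | h2
            · exact hne h2
            · exact hbv (Finset.mem_singleton.mp h2).symm
          · exact Finset.mem_singleton.mp h
        rw [hza] at hz2
        rcases Finset.mem_insert.mp hz2 with h2 | h2
        · exact absurd h2 haw
        · rw [hAi, Finset.mem_singleton.mp h2]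
      obtain ⟨i0, hi0⟩ := hdegpos v
      have hAi0 : A i0 = {v, b} := hva i0 hi0
      have hne0 : i0 ≠ j0 := by
        intro h
        exact hadj j0 (h ▸ hi0) hj0
      have hbAi0 : b ∈ A i0 := by
        rw [hAi0]; exact Finset.mem_insert_of_mem (Finset.mem_singleton_self b)
      have hbAj0 : b ∈ A j0 := by
        rw [hAj0]; exact Finset.mem_insert_of_mem (Finset.mem_singleton_self b)
      have h1 := hQ i0 v b (fun h => hbv h.symm) hAi0
      have h2 := hQ j0 w b (fun h => hbw h.symm) hAj0
      have hφvB1 : φ v ∈ B i0 := by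
        rw [h1.2]; exact Finset.mem_insert_self _ _
      have hφvB2 : φ v ∈ B j0 := by
        rw [h2.2, hvw]; exact Finset.mem_insert_self _ _
      have hφbB1 : φ b ∈ B i0 := by
        rw [h1.2]; exact Finset.mem_insert_of_mem (Finset.mem_singleton_self _)
      have hφbB2 : φ b ∈ B j0 := by
        rw [h2.2]; exact Finset.mem_insert_of_mem (Finset.mem_singleton_self _)
      have hcard1 : (B i0 ∩ B j0).card = 1 := hBint b i0 j0 hne0 hbAi0 hbAj0
      have := two_le_card_inter hφvB1 hφvB2 hφbB1 hφbB2 h1.1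
      omega
  have hbij : Function.Bijective φ := Finite.injective_iff_bijective.mp hinj
  refine ⟨(Equiv.ofBijective φ hbij).symm, fun i v => ?_⟩
  set σ : Equiv.Perm (Fin n) := Equiv.ofBijective φ hbij with hσ
  obtain ⟨p, q, hpq, hei, hAi⟩ := hA2 i
  have hB : B i = {φ p, φ q} := (hQ i p q hpq hAi).2
  have hmem : W' i v = 1 ↔ σ.symm v ∈ e i := by
    rw [← hmemA i]
    constructor
    · intro h
      have hv : v ∈ B i := (hmemB i v).mpr h
      rw [hB] at hv
      rcases Finset.mem_insert.mp hv with h2 | h2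
      · have hsp : σ.symm v = p := by rw [h2]; exact σ.symm_apply_apply p
        rw [hsp, hAi]; exact Finset.mem_insert_self p {q}
      · have hsq : σ.symm v = q := by
          rw [Finset.mem_singleton.mp h2]; exact σ.symm_apply_apply q
        rw [hsq, hAi]; exact Finset.mem_insert_of_mem (Finset.mem_singleton_self q)
    · intro h
      rw [hAi] at h
      apply (hmemB i v).mp
      rw [hB]
      rcases Finset.mem_insert.mp h with h2 | h2
      · have : v = φ p := by rw [← h2]; exact (σ.apply_symm_apply v).symm
        rw [this]; exact Finset.mem_insert_self _ _
      · have : v = φ q := by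
          rw [← Finset.mem_singleton.mp h2]; exact (σ.apply_symm_apply v).symm
        rw [this]; exact Finset.mem_insert_of_mem (Finset.mem_singleton_self _)
  rcases hW'01 i v with h0 | h1
  · rw [h0, hW]
    rw [if_neg]
    intro h
    have h2 := hmem.mpr h
    rw [h0] at h2
    norm_num at h2
  · rw [h1, hW, if_pos (hmem.mp h1)]
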